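/- Let d ≥ 1 be an integer and let ε > 0, a > 0, b > 0 and c ∈ ℝ. Then the integral ∫_{{x ∈ ℝ^d : |x| > ε}} cos²(|x|^a + c)/|x|^b dx is finite if and only if b > d. -/

import Mathlib

open MeasureTheory Set Metric Real
open scoped ENNReal


variable {E : Type*} [NormedAddCommGroup E] [NormedSpace ℝ E] [MeasurableSpace E]
  [BorelSpace E] [Nontrivial E] [FiniteDimensional ℝ E]

lemma lintegral_fun_norm_addHaar' (μ : Measure E) [μ.IsAddHaarMeasure]
    (f : ℝ → ℝ≥0∞) (hf : Measurable f) :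
    ∫⁻ x, f ‖x‖ ∂μ = μ.toSphere univ *
      ∫⁻ y in Ioi (0 : ℝ), ENNReal.ofReal (y ^ (Module.finrank ℝ E - 1)) * f y := by
  have h1 : ∫⁻ x, f ‖x‖ ∂μ = ∫⁻ x : ({0}ᶜ : Set E), f ‖x.1‖ ∂(μ.comap (↑)) := by
    rw [lintegral_subtype_comap (measurableSet_singleton (0:E)).compl (fun x => f ‖x‖),
      MeasureTheory.restrict_compl_singleton]
  have h2 : ∫⁻ x : ({0}ᶜ : Set E), f ‖x.1‖ ∂(μ.comap (↑)) =
      ∫⁻ p : sphere (0 : E) 1 × Ioi (0 : ℝ), f p.2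
        ∂(μ.toSphere.prod (.volumeIoiPow (Module.finrank ℝ E - 1))) :=
    by simpa [homeomorphUnitSphereProd] using
        μ.measurePreserving_homeomorphUnitSphereProd.lintegral_comp_emb
          (Homeomorph.measurableEmbedding _) (f ∘ Subtype.val ∘ Prod.snd)
  have hfc : Measurable (fun p : sphere (0 : E) 1 × Ioi (0 : ℝ) => f p.2) :=
    hf.comp (measurable_subtype_coe.comp measurable_snd)
  have h3 : ∫⁻ p : sphere (0 : E) 1 × Ioi (0 : ℝ), f p.2
        ∂(μ.toSphere.prod (.volumeIoiPow (Module.finrank ℝ E - 1))) =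
      μ.toSphere univ * ∫⁻ y : Ioi (0 : ℝ), f y ∂(Measure.volumeIoiPow (Module.finrank ℝ E - 1)) := by
    rw [lintegral_prod _ hfc.aemeasurable,
      show (fun x : ↑(sphere (0:E) 1) => ∫⁻ y : Ioi (0:ℝ), f ↑(x, y).2
          ∂(Measure.volumeIoiPow (Module.finrank ℝ E - 1))) = fun _ =>
          ∫⁻ y : Ioi (0:ℝ), f ↑y ∂(Measure.volumeIoiPow (Module.finrank ℝ E - 1)) from rfl,
      lintegral_const, mul_comm]
  have h4 : ∫⁻ y : Ioi (0 : ℝ), f y ∂(Measure.volumeIoiPow (Module.finrank ℝ E - 1)) =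
      ∫⁻ y in Ioi (0 : ℝ), ENNReal.ofReal (y ^ (Module.finrank ℝ E - 1)) * f y := by
    rw [Measure.volumeIoiPow,
      lintegral_withDensity_eq_lintegral_mul (g := fun y : Ioi (0:ℝ) => f ↑y) _
        ((measurable_subtype_coe.pow_const _).ennreal_ofReal)
        (hf.comp measurable_subtype_coe)]
    simp only [Pi.mul_apply]
    rw [← lintegral_subtype_comap measurableSet_Ioi
        (fun y => ENNReal.ofReal (y ^ (Module.finrank ℝ E - 1)) * f y)]
  rw [h1, h2, h3, h4]



lemma tsum_ofReal_one_div_succ : ∑' n : ℕ, ENNReal.ofReal (1 / ((n : ℝ) + 1)) = ⊤ := by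
  by_contra h
  have h1 : Summable fun n : ℕ => Real.toNNReal (1 / ((n : ℝ) + 1)) :=
    ENNReal.tsum_coe_ne_top_iff_summable.mp h
  have h2 : Summable fun n : ℕ => (1 / ((n : ℝ) + 1)) := by
    have := NNReal.summable_coe.mpr h1
    refine this.congr fun n => ?_
    rw [Real.coe_toNNReal _ (by positivity)]
  apply Real.not_summable_one_div_natCast
  exact (summable_nat_add_iff 1).mp (h2.congr fun n => by push_cast; ring) |>.congr fun n => rfl

lemma lintegral_rpow_mul_cos_sq_eq_top (m c A : ℝ) (hm : -1 ≤ m) :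
    ∫⁻ u in Ioi A, ENNReal.ofReal (u ^ m * Real.cos (u + c) ^ 2) = ⊤ := by
  have hπ1 : (1:ℝ) ≤ π := by linarith [Real.pi_gt_three]
  have hπ4 : π ≤ 4 := Real.pi_le_four
  set M : ℝ := max A 1 with hM
  have hM1 : (1:ℝ) ≤ M := le_max_right A 1
  have hMA : A ≤ M := le_max_left A 1
  set N₀ : ℕ := ⌈c + 2 + M⌉₊ with hN₀def
  have hN₀ : c + 2 + M ≤ N₀ := Nat.le_ceil _
  set t : ℕ → ℝ := fun n => 2*π*(n+N₀) - c with ht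
  set I : ℕ → Set ℝ := fun n => Ico (t n - π/4) (t n + π/4) with hI
  set C : ℝ := 2*π*(N₀+1) + |c| + 1 with hC
  have hCpos : 0 < C := by positivity
  have htn : ∀ n : ℕ, M + 1 ≤ t n - π/4 := by
    intro n
    have h1 : (N₀:ℝ) ≤ 2*π*(n+N₀) := by
      nlinarith [Nat.cast_nonneg (α := ℝ) n, Nat.cast_nonneg (α := ℝ) N₀]
    simp only [ht]
    nlinarith
  have hub : ∀ n : ℕ, ∀ u ∈ I n, u ≤ (n+1)*C := by
    intro n u hu
    simp only [hI, mem_Ico] at hu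
    have h3 : t n + π/4 ≤ (n+1)*C := by
      simp only [ht, hC]
      nlinarith [neg_le_abs c, abs_nonneg c, Nat.cast_nonneg (α := ℝ) n,
        Nat.cast_nonneg (α := ℝ) N₀,
        mul_nonneg (Nat.cast_nonneg (α := ℝ) n) (abs_nonneg c),
        mul_nonneg (Nat.cast_nonneg (α := ℝ) n) (Nat.cast_nonneg (α := ℝ) N₀)]
    exact hu.2.le.trans h3
  have hcos : ∀ n : ℕ, ∀ u ∈ I n, 1/2 ≤ Real.cos (u + c) ^ 2 := by
    intro n u hu
    simp only [hI, mem_Ico] at hu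
    set θ : ℝ := u + c - 2*π*(n+N₀) with hθ
    have hθt : θ = u - t n := by simp only [hθ, ht]; ring
    have habs : |θ| ≤ π/4 := by
      rw [hθt, abs_le]
      exact ⟨by linarith [hu.1], by linarith [hu.2]⟩
    have hrw : u + c = θ + ((n + N₀ : ℕ) : ℝ) * (2*π) := by
      simp only [hθ]; push_cast; ring
    rw [hrw, Real.cos_add_nat_mul_two_pi]
    have h1 : Real.cos (π/4) ≤ Real.cos |θ| :=
      Real.cos_le_cos_of_nonneg_of_le_pi (abs_nonneg θ) (by linarith) habs
    rw [Real.cos_abs, Real.cos_pi_div_four] at h1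
    have h2 : (Real.sqrt 2 / 2) ^ 2 ≤ Real.cos θ ^ 2 :=
      pow_le_pow_left₀ (by positivity) h1 2
    have h3 : (Real.sqrt 2 / 2) ^ 2 = 1/2 := by
      rw [div_pow, Real.sq_sqrt (by norm_num : (0:ℝ) ≤ 2)]; norm_num
    linarith
  have hval : ∀ n : ℕ, ∀ u ∈ I n, 1/(((n:ℝ)+1)*C) * (1/2) ≤ u ^ m * Real.cos (u + c) ^ 2 := by
    intro n u hu
    have hcosu := hcos n u hu
    have hle := hub n u hu
    simp only [hI, mem_Ico] at hu
    have hu1 : (1:ℝ) ≤ u := by linarith [htn n, hu.1]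
    have hu0 : (0:ℝ) < u := by linarith
    have h1 : u ^ (-1 : ℝ) ≤ u ^ m := Real.rpow_le_rpow_of_exponent_le hu1 (by linarith)
    have h2 : (1:ℝ)/(((n:ℝ)+1)*C) ≤ u ^ (-1:ℝ) := by
      rw [Real.rpow_neg_one, one_div]
      exact inv_anti₀ hu0 hle
    calc 1/(((n:ℝ)+1)*C) * (1/2) ≤ u ^ m * (1/2) := by
          apply mul_le_mul_of_nonneg_right _ (by norm_num)
          linarith
      _ ≤ u ^ m * Real.cos (u + c) ^ 2 :=
          mul_le_mul_of_nonneg_left hcosu (Real.rpow_nonneg hu0.le m)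
  have hImeas : ∀ n, MeasurableSet (I n) := fun n => measurableSet_Ico
  have hIsub : (⋃ n, I n) ⊆ Ioi A := by
    refine iUnion_subset fun n u hu => ?_
    simp only [hI, mem_Ico] at hu
    exact mem_Ioi.mpr (by linarith [htn n, hu.1])
  have hdisj : Pairwise (Function.onFun Disjoint I) := by
    have key : ∀ {i j : ℕ}, i < j → Disjoint (I i) (I j) := by
      intro i j hij
      apply Set.Ico_disjoint_Ico.mpr
      have hij' : (i:ℝ) + 1 ≤ j := by exact_mod_cast hij
      have h1 : t i + π/4 ≤ t j - π/4 := by simp only [ht]; nlinarith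
      exact min_le_of_left_le (le_max_of_le_right h1)
    intro i j hij
    rcases hij.lt_or_gt with h | h
    · exact key h
    · exact (key h).symm
  have hmeasInt : Measurable fun u : ℝ => ENNReal.ofReal (u ^ m * Real.cos (u + c) ^ 2) := by
    fun_prop
  have key : ∀ n : ℕ, ENNReal.ofReal (π/(4*C)) * ENNReal.ofReal (1/((n:ℝ)+1)) ≤
      ∫⁻ u in I n, ENNReal.ofReal (u ^ m * Real.cos (u + c) ^ 2) := by
    intro n
    have h1 : ∫⁻ _u in I n, ENNReal.ofReal (1/(((n:ℝ)+1)*C) * (1/2)) ≤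
        ∫⁻ u in I n, ENNReal.ofReal (u ^ m * Real.cos (u + c) ^ 2) :=
      setLIntegral_mono hmeasInt fun u hu => ENNReal.ofReal_le_ofReal (hval n u hu)
    have h2 : (∫⁻ _u in I n, ENNReal.ofReal (1/(((n:ℝ)+1)*C) * (1/2))) =
        ENNReal.ofReal (1/(((n:ℝ)+1)*C) * (1/2)) * ENNReal.ofReal (π/2) := by
      rw [setLIntegral_const, hI, Real.volume_Ico,
        show t n + π/4 - (t n - π/4) = π/2 by ring]
    refine le_trans (le_of_eq ?_) (h2 ▸ h1)
    rw [← ENNReal.ofReal_mul (by positivity), ← ENNReal.ofReal_mul (by positivity)]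
    congr 1
    have hn : ((n:ℝ)+1) ≠ 0 := by positivity
    field_simp
    ring
  refine top_le_iff.mp ?_
  calc (⊤:ℝ≥0∞) = ENNReal.ofReal (π/(4*C)) * ∑' n : ℕ, ENNReal.ofReal (1/((n:ℝ)+1)) := by
        rw [tsum_ofReal_one_div_succ, ENNReal.mul_top]
        exact (ENNReal.ofReal_pos.mpr (by positivity)).ne'
    _ = ∑' n : ℕ, ENNReal.ofReal (π/(4*C)) * ENNReal.ofReal (1/((n:ℝ)+1)) :=
        ENNReal.tsum_mul_left.symm
    _ ≤ ∑' n : ℕ, ∫⁻ u in I n, ENNReal.ofReal (u ^ m * Real.cos (u + c) ^ 2) :=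
        ENNReal.tsum_le_tsum key
    _ = ∫⁻ u in ⋃ n, I n, ENNReal.ofReal (u ^ m * Real.cos (u + c) ^ 2) :=
        (lintegral_iUnion hImeas hdisj _).symm
    _ ≤ ∫⁻ u in Ioi A, ENNReal.ofReal (u ^ m * Real.cos (u + c) ^ 2) :=
        lintegral_mono_set hIsub

theorem integrable_cos_sq_div_norm_rpow_iff
    (d : ℕ) (hd : 1 ≤ d) (ε a b c : ℝ) (hε : 0 < ε) (ha : 0 < a) (hb : 0 < b) :
    MeasureTheory.IntegrableOn
      (fun x : EuclideanSpace ℝ (Fin d) => Real.cos (‖x‖ ^ a + c) ^ 2 / ‖x‖ ^ b)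
      {x : EuclideanSpace ℝ (Fin d) | ε < ‖x‖} ↔ (d : ℝ) < b := by
  haveI : Nonempty (Fin d) := ⟨⟨0, hd⟩⟩
  haveI : Nontrivial (EuclideanSpace ℝ (Fin d)) := inferInstance
  have hfinrank : Module.finrank ℝ (EuclideanSpace ℝ (Fin d)) = d := finrank_euclideanSpace_fin
  have hdn : ((d - 1 : ℕ) : ℝ) = (d : ℝ) - 1 := by
    push_cast [Nat.cast_sub hd]; ring
  set g : EuclideanSpace ℝ (Fin d) → ℝ := fun x => Real.cos (‖x‖ ^ a + c) ^ 2 / ‖x‖ ^ b with hg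
  have hgmeas : Measurable g := by fun_prop
  have hg0 : ∀ x, 0 ≤ g x := fun x =>
    div_nonneg (sq_nonneg _) (Real.rpow_nonneg (norm_nonneg x) b)
  have hSmeas : MeasurableSet {x : EuclideanSpace ℝ (Fin d) | ε < ‖x‖} :=
    measurableSet_lt measurable_const measurable_norm
  -- step 1 : reduce integrability to a lintegral
  have hiff1 : IntegrableOn g {x : EuclideanSpace ℝ (Fin d) | ε < ‖x‖} ↔
      (∫⁻ x in {x : EuclideanSpace ℝ (Fin d) | ε < ‖x‖}, ENNReal.ofReal (g x)) < ⊤ := by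
    rw [IntegrableOn, show Integrable g (volume.restrict {x : EuclideanSpace ℝ (Fin d) | ε < ‖x‖})
        ↔ HasFiniteIntegral g (volume.restrict {x : EuclideanSpace ℝ (Fin d) | ε < ‖x‖}) from
      ⟨fun h => h.2, fun h => ⟨hgmeas.aestronglyMeasurable, h⟩⟩,
      hasFiniteIntegral_iff_ofReal (Filter.Eventually.of_forall hg0)]
  -- step 2 : polar coordinates
  set F : ℝ → ℝ≥0∞ := fun r =>
    (Ioi ε).indicator (fun r => ENNReal.ofReal (Real.cos (r ^ a + c) ^ 2 / r ^ b)) r with hF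
  have hFmeas : Measurable F := by
    apply Measurable.indicator _ measurableSet_Ioi
    fun_prop
  have hpolar : (∫⁻ x in {x : EuclideanSpace ℝ (Fin d) | ε < ‖x‖}, ENNReal.ofReal (g x)) =
      (volume : Measure (EuclideanSpace ℝ (Fin d))).toSphere univ *
        ∫⁻ y in Ioi ε, ENNReal.ofReal (y ^ (d - 1 : ℕ) * (Real.cos (y ^ a + c) ^ 2 / y ^ b)) := by
    rw [← lintegral_indicator hSmeas]
    have h1 : (fun x : EuclideanSpace ℝ (Fin d) =>
        ({x : EuclideanSpace ℝ (Fin d) | ε < ‖x‖}).indicator (fun x => ENNReal.ofReal (g x)) x)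
        = fun x => F ‖x‖ := by
      funext x
      by_cases hx : ε < ‖x‖ <;>
        simp [hF, Set.indicator_apply, hx, hg, Set.mem_setOf_eq]
    rw [h1, lintegral_fun_norm_addHaar' volume F hFmeas, hfinrank]
    congr 1
    have h2 : ∀ y : ℝ, ENNReal.ofReal (y ^ (d - 1 : ℕ)) * F y
        = (Ioi ε).indicator
          (fun r => ENNReal.ofReal (r ^ (d - 1 : ℕ) * (Real.cos (r ^ a + c) ^ 2 / r ^ b))) y := by
      intro y
      by_cases hy : y ∈ Ioi ε
      · have hy0 : (0:ℝ) < y := hε.trans hy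
        simp only [hF, Set.indicator_of_mem hy]
        rw [← ENNReal.ofReal_mul (by positivity)]
      · simp [hF, Set.indicator_of_notMem hy]
    rw [lintegral_congr h2, lintegral_indicator measurableSet_Ioi,
      Measure.restrict_restrict measurableSet_Ioi,
      inter_eq_left.mpr (Ioi_subset_Ioi hε.le)]
  -- constant is nonzero and finite
  set c₀ : ℝ≥0∞ := (volume : Measure (EuclideanSpace ℝ (Fin d))).toSphere univ with hc₀
  have hc₀top : c₀ ≠ ⊤ := measure_ne_top _ _
  have hc₀0 : c₀ ≠ 0 := by
    rw [hc₀, Measure.toSphere_apply_univ]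
    refine (ENNReal.mul_pos ?_ ?_).ne'
    · rw [hfinrank]
      exact Nat.cast_ne_zero.mpr (by omega)
    · exact (measure_ball_pos _ _ one_pos).ne'
  set P : ℝ≥0∞ :=
    ∫⁻ y in Ioi ε, ENNReal.ofReal (y ^ (d - 1 : ℕ) * (Real.cos (y ^ a + c) ^ 2 / y ^ b)) with hP
  have hiff2 : IntegrableOn g {x : EuclideanSpace ℝ (Fin d) | ε < ‖x‖} ↔ P < ⊤ := by
    rw [hiff1, hpolar]
    constructor
    · intro h
      by_contra hPtop
      rw [not_lt, top_le_iff] at hPtop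
      rw [hPtop, ENNReal.mul_top hc₀0] at h
      exact absurd h (lt_irrefl _)
    · intro h
      exact ENNReal.mul_lt_top hc₀top.lt_top h
  rw [hiff2]
  -- now the one-dimensional statement
  constructor
  · -- P < ⊤ → d < b
    intro hPlt
    by_contra hbd
    push_neg at hbd
    -- rewrite the integrand using rpow
    set h : ℝ → ℝ := fun y => y ^ ((d:ℝ) - 1 - b) * Real.cos (y ^ a + c) ^ 2 with hh
    have hmeash : Measurable h := by fun_prop
    have hcongr : ∀ y ∈ Ioi ε,
        ENNReal.ofReal (y ^ (d - 1 : ℕ) * (Real.cos (y ^ a + c) ^ 2 / y ^ b))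
          = ENNReal.ofReal (h y) := by
      intro y hy
      have hy0 : (0:ℝ) < y := hε.trans hy
      congr 1
      simp only [hh]
      rw [← Real.rpow_natCast y (d - 1), hdn, div_eq_mul_inv, ← Real.rpow_neg hy0.le]
      rw [show (d:ℝ) - 1 - b = ((d:ℝ) - 1) + (-b) by ring, Real.rpow_add hy0]
      ring
    have hPeq : P = ∫⁻ y in Ioi ε, ENNReal.ofReal (h y) :=
      setLIntegral_congr_fun measurableSet_Ioi hcongr
    have hinth : IntegrableOn h (Ioi ε) := by
      refine ⟨hmeash.aestronglyMeasurable, ?_⟩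
      rw [hasFiniteIntegral_iff_ofReal]
      · rw [← hPeq]; exact hPlt
      · filter_upwards [ae_restrict_mem measurableSet_Ioi] with y hy
        exact mul_nonneg (Real.rpow_nonneg (hε.trans hy).le _) (sq_nonneg _)
    -- change of variables u ↦ u ^ a⁻¹
    have hεa : (0:ℝ) < ε ^ a := Real.rpow_pos_of_pos hε a
    have himg : (fun u : ℝ => u ^ (a⁻¹)) '' (Ioi (ε ^ a)) = Ioi ε := by
      ext y
      constructor
      · rintro ⟨u, hu, rfl⟩
        rw [mem_Ioi, show ε = (ε ^ a) ^ a⁻¹ from (Real.rpow_rpow_inv hε.le ha.ne').symm]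
        exact Real.rpow_lt_rpow hεa.le hu (by positivity)
      · intro hy
        have hy0 : (0:ℝ) < y := hε.trans hy
        exact ⟨y ^ a, mem_Ioi.mpr (Real.rpow_lt_rpow hε.le hy ha),
          Real.rpow_rpow_inv hy0.le ha.ne'⟩
    have hderiv : ∀ u ∈ Ioi (ε ^ a), HasDerivWithinAt (fun u : ℝ => u ^ (a⁻¹))
        (a⁻¹ * u ^ (a⁻¹ - 1)) (Ioi (ε ^ a)) u := fun u hu =>
      (Real.hasDerivAt_rpow_const (Or.inl (hεa.trans hu).ne')).hasDerivWithinAt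
    have hinj : InjOn (fun u : ℝ => u ^ (a⁻¹)) (Ioi (ε ^ a)) := by
      intro u hu v hv huv
      have hu0 : (0:ℝ) ≤ u := (hεa.trans hu).le
      have hv0 : (0:ℝ) ≤ v := (hεa.trans hv).le
      have := congrArg (fun z : ℝ => z ^ a) huv
      simpa [Real.rpow_inv_rpow hu0 ha.ne', Real.rpow_inv_rpow hv0 ha.ne'] using this
    have hint2 : IntegrableOn
        (fun u : ℝ => |a⁻¹ * u ^ (a⁻¹ - 1)| • h (u ^ (a⁻¹))) (Ioi (ε ^ a)) := by
      rw [← integrableOn_image_iff_integrableOn_abs_deriv_smul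
        measurableSet_Ioi hderiv hinj h, himg]
      exact hinth
    -- lower bound its lintegral by the divergent one
    set m : ℝ := ((d:ℝ) - b) / a - 1 with hm
    have hm1 : -1 ≤ m := by
      rw [hm]
      have : (0:ℝ) ≤ ((d:ℝ) - b) / a := div_nonneg (by linarith) ha.le
      linarith
    have hGeq : ∀ u ∈ Ioi (ε ^ a),
        ENNReal.ofReal (a⁻¹ * (u ^ m * Real.cos (u + c) ^ 2))
          = ENNReal.ofReal (|a⁻¹ * u ^ (a⁻¹ - 1)| • h (u ^ (a⁻¹))) := by
      intro u hu
      have hu0 : (0:ℝ) < u := hεa.trans hu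
      congr 1
      rw [smul_eq_mul, abs_of_nonneg (by positivity)]
      simp only [hh]
      have e1 : (u ^ (a⁻¹)) ^ a = u := Real.rpow_inv_rpow hu0.le ha.ne'
      have e2 : (u ^ (a⁻¹)) ^ ((d:ℝ) - 1 - b) = u ^ (a⁻¹ * ((d:ℝ) - 1 - b)) :=
        (Real.rpow_mul hu0.le _ _).symm
      rw [e1, e2, hm]
      rw [show a⁻¹ * u ^ (a⁻¹ - 1) * (u ^ (a⁻¹ * ((d:ℝ) - 1 - b)) * Real.cos (u + c) ^ 2)
          = a⁻¹ * ((u ^ (a⁻¹ - 1) * u ^ (a⁻¹ * ((d:ℝ) - 1 - b))) * Real.cos (u + c) ^ 2) by ring,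
        ← Real.rpow_add hu0]
      congr 3
      field_simp
      ring
    have hfin : (∫⁻ u in Ioi (ε ^ a),
        ENNReal.ofReal (a⁻¹ * (u ^ m * Real.cos (u + c) ^ 2))) < ⊤ := by
      calc (∫⁻ u in Ioi (ε ^ a), ENNReal.ofReal (a⁻¹ * (u ^ m * Real.cos (u + c) ^ 2)))
          = ∫⁻ u in Ioi (ε ^ a),
            ENNReal.ofReal (|a⁻¹ * u ^ (a⁻¹ - 1)| • h (u ^ (a⁻¹))) :=
            setLIntegral_congr_fun measurableSet_Ioi hGeq
        _ < ⊤ := by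
            refine lt_of_le_of_lt (lintegral_mono fun u => Real.ofReal_le_enorm _) hint2.2
    -- but the lintegral is infinite
    have htop : (∫⁻ u in Ioi (ε ^ a),
        ENNReal.ofReal (a⁻¹ * (u ^ m * Real.cos (u + c) ^ 2))) = ⊤ := by
      have heq : ∀ u : ℝ, ENNReal.ofReal (a⁻¹ * (u ^ m * Real.cos (u + c) ^ 2))
          = ENNReal.ofReal a⁻¹ * ENNReal.ofReal (u ^ m * Real.cos (u + c) ^ 2) := fun u =>
        ENNReal.ofReal_mul (by positivity)
      rw [lintegral_congr heq, lintegral_const_mul' _ _ ENNReal.ofReal_ne_top,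
        lintegral_rpow_mul_cos_sq_eq_top m c (ε ^ a) hm1, ENNReal.mul_top]
      exact (ENNReal.ofReal_pos.mpr (by positivity)).ne'
    rw [htop] at hfin
    exact absurd hfin (lt_irrefl _)
  · -- d < b → P < ⊤
    intro hdb
    have hcomp : ∀ y ∈ Ioi ε,
        ENNReal.ofReal (y ^ (d - 1 : ℕ) * (Real.cos (y ^ a + c) ^ 2 / y ^ b))
          ≤ ENNReal.ofReal (y ^ ((d:ℝ) - 1 - b)) := by
      intro y hy
      have hy0 : (0:ℝ) < y := hε.trans hy
      apply ENNReal.ofReal_le_ofReal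
      rw [← Real.rpow_natCast y (d - 1), hdn]
      have hcos1 : Real.cos (y ^ a + c) ^ 2 ≤ 1 := by
        have := Real.neg_one_le_cos (y ^ a + c)
        have := Real.cos_le_one (y ^ a + c)
        nlinarith
      calc y ^ ((d:ℝ) - 1) * (Real.cos (y ^ a + c) ^ 2 / y ^ b)
          ≤ y ^ ((d:ℝ) - 1) * (1 / y ^ b) := by
            apply mul_le_mul_of_nonneg_left _ (Real.rpow_nonneg hy0.le _)
            exact (div_le_div_iff_of_pos_right (Real.rpow_pos_of_pos hy0 b)).mpr hcos1
        _ = y ^ ((d:ℝ) - 1 - b) := by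
            rw [one_div, ← Real.rpow_neg hy0.le, ← Real.rpow_add hy0]
            ring_nf
    have hint : IntegrableOn (fun y : ℝ => y ^ ((d:ℝ) - 1 - b)) (Ioi ε) :=
      integrableOn_Ioi_rpow_of_lt (by linarith) hε
    have hfin : (∫⁻ y in Ioi ε, ENNReal.ofReal (y ^ ((d:ℝ) - 1 - b))) < ⊤ := by
      rw [← hasFiniteIntegral_iff_ofReal]
      · exact hint.2
      · filter_upwards [ae_restrict_mem measurableSet_Ioi] with y hy
        exact Real.rpow_nonneg (hε.trans hy).le _
    refine lt_of_le_of_lt ?_ hfin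
    refine setLIntegral_mono (by fun_prop) hcomp
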